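/- For an odd prime p and n ≢ 0, 1 (mod p), the image of the BV-operator Δ: H_*(C_n(ℂ); F_p) → H_{*+1}(C_n(ℂ); F_p) is exactly the span of the basis monomials divisible by [ι,ι]; consequently coker(Δ) has a basis given by the monomials not containing [ι,ι]. -/

import Mathlib

/-!
STATEMENT 11: For an odd prime `p` and `n ≢ 0, 1 (mod p)`, the image of the BV-operator
`Δ : H_*(C_n(ℂ); 𝔽_p) → H_{*+1}(C_n(ℂ); 𝔽_p)` is exactly the span of the basis
monomials divisible by `u = [ι,ι]`; consequently `coker(Δ)` has a basis given by the
monomials not containing `[ι,ι]`.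

We use the monomial basis model of `H_*(C_n(ℂ); 𝔽_p)`: the weight-`n` monomials of the
free graded-commutative algebra `𝔽_p[ι, β_1, …] ⊗ Λ[u, α_1, …]`, on which `Δ` acts by
`Δ(ι^a x) = a(a-1) ι^{a-2} u x` and `Δ(ι^a u x) = 0` for `x` a monomial in the
`α_i, β_i`.
-/

/-- A monomial in `𝔽_p[ι, β_1, β_2, …] ⊗ Λ[u, α_1, α_2, …]`: `a` is the exponent of
`ι`, `b j` the exponent of `β_{j+1}`, `e` the presence of `u = [ι,ι]`, `j ∈ s` the
presence of `α_{j+1}`. -/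
structure OddMon where
  a : ℕ
  b : ℕ →₀ ℕ
  e : Bool
  s : Finset ℕ

/-- Weight (number of points) of a monomial. -/
def OddMon.weight (p : ℕ) (m : OddMon) : ℕ :=
  m.a + (cond m.e 2 0) + m.b.sum (fun j k => k * (2 * p ^ (j + 1))) +
    ∑ j ∈ m.s, 2 * p ^ (j + 1)

/-- The monomial basis of `H_*(C_n(ℂ); 𝔽_p)`: monomials of weight `n`. -/
def Mn (p n : ℕ) : Type := {m : OddMon // m.weight p = n}

/-- `H_*(C_n(ℂ); 𝔽_p)` as the vector space with basis the weight-`n` monomials. -/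
def Hn (p n : ℕ) : Type := Mn p n →₀ ZMod p

noncomputable instance (p n : ℕ) : AddCommGroup (Hn p n) := Finsupp.instAddCommGroup
noncomputable instance (p n : ℕ) : Module (ZMod p) (Hn p n) := Finsupp.module _ _

/-- The value of the BV-operator `Δ` on a basis monomial:
`Δ(ι^a x) = a(a-1) ι^{a-2} u x` if `u` does not occur, and `Δ = 0` on monomials
containing `u`. -/
noncomputable def deltaMon (p n : ℕ) (m : Mn p n) : Hn p n :=
  if h : m.1.e = false ∧ 2 ≤ m.1.a then
    Finsupp.single
      ⟨⟨m.1.a - 2, m.1.b, true, m.1.s⟩, by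
        have hw := m.2
        simp only [OddMon.weight, h.1, cond_false, cond_true] at hw ⊢
        omega⟩
      ((m.1.a * (m.1.a - 1) : ℕ) : ZMod p)
  else 0

/-- The BV-operator `Δ` on `H_*(C_n(ℂ); 𝔽_p)`, extended linearly from its values on
the monomial basis. -/
noncomputable def deltaOp (p n : ℕ) : Hn p n →ₗ[ZMod p] Hn p n :=
  Finsupp.linearCombination (ZMod p) (deltaMon p n)

-- auxiliary lemmas

lemma OddMon.p_dvd_rest (p : ℕ) (m : OddMon) :
    p ∣ m.b.sum (fun j k => k * (2 * p ^ (j + 1))) + ∑ j ∈ m.s, 2 * p ^ (j + 1) := by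
  apply dvd_add
  · exact Finset.dvd_sum fun j _ =>
      ((dvd_pow_self p (Nat.succ_ne_zero j)).mul_left 2).mul_left _
  · exact Finset.dvd_sum fun j _ => (dvd_pow_self p (Nat.succ_ne_zero j)).mul_left 2

lemma a_mod (p n : ℕ) (m : Mn p n) (he : m.1.e = false) : m.1.a % p = n % p := by
  have hw := m.2
  simp only [OddMon.weight, he, cond_false] at hw
  obtain ⟨t, ht⟩ := OddMon.p_dvd_rest p m.1
  have h : n = m.1.a + p * t := by omega
  calc m.1.a % p = (m.1.a + p * t) % p := (Nat.add_mul_mod_self_left _ _ _).symm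
    _ = n % p := by rw [← h]

lemma two_le_a (p n : ℕ) (h0 : n % p ≠ 0) (h1 : n % p ≠ 1) (m : Mn p n)
    (he : m.1.e = false) : 2 ≤ m.1.a := by
  have h := a_mod p n m he
  have := Nat.mod_le m.1.a p
  omega

lemma coeff_ne (p n : ℕ) (hp : p.Prime) (h0 : n % p ≠ 0) (h1 : n % p ≠ 1)
    (a : ℕ) (ha : a % p = n % p) : ((a * (a - 1) : ℕ) : ZMod p) ≠ 0 := by
  rw [Ne, ZMod.natCast_eq_zero_iff]
  intro hd
  rcases (Nat.Prime.dvd_mul hp).1 hd with h | h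
  · have : a % p = 0 := Nat.mod_eq_zero_of_dvd h
    omega
  · obtain ⟨k, hk⟩ := h
    have h2 : 2 ≤ a := by have := Nat.mod_le a p; omega
    have h3 : a = 1 + p * k := by omega
    rw [h3, Nat.add_mul_mod_self_left, Nat.mod_eq_of_lt hp.one_lt] at ha
    omega

lemma deltaMon_eq (p n : ℕ) (m : Mn p n) (he : m.1.e = false) (h2 : 2 ≤ m.1.a)
    (t : Mn p n) (ht : t.1 = ⟨m.1.a - 2, m.1.b, true, m.1.s⟩) :
    deltaMon p n m = Finsupp.single t ((m.1.a * (m.1.a - 1) : ℕ) : ZMod p) := by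
  erw [deltaMon, dif_pos ⟨he, h2⟩]
  congr 1
  exact Subtype.ext ht.symm

theorem statement11 (p : ℕ) (hp : p.Prime) (hodd : Odd p) (n : ℕ)
    (h0 : n % p ≠ 0) (h1 : n % p ≠ 1) :
    LinearMap.range (deltaOp p n) =
      Submodule.span (ZMod p)
        {v : Hn p n | ∃ m : Mn p n, m.1.e = true ∧ v = Finsupp.single m 1} ∧
    ∃ B : Module.Basis {m : Mn p n // m.1.e = false} (ZMod p)
        (Hn p n ⧸ LinearMap.range (deltaOp p n)),
      ∀ m, B m = Submodule.Quotient.mk (Finsupp.single m.1 1) := by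
  classical
  haveI : Fact p.Prime := ⟨hp⟩
  set E : Set (Mn p n) := {m | m.1.e = true} with hE
  have hSimage : {v : Hn p n | ∃ m : Mn p n, m.1.e = true ∧ v = Finsupp.single m 1}
      = (fun m => Finsupp.single m (1 : ZMod p)) '' E := by
    ext v
    constructor
    · rintro ⟨m, h1, h2⟩; exact ⟨m, h1, h2.symm⟩
    · rintro ⟨m, h1, h2⟩; exact ⟨m, h1, h2.symm⟩
  have hspan : Submodule.span (ZMod p)
      {v : Hn p n | ∃ m : Mn p n, m.1.e = true ∧ v = Finsupp.single m 1}
      = Finsupp.supported (ZMod p) (ZMod p) E := by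
    erw [hSimage, ← Finsupp.supported_eq_span_single]
  have hrange : LinearMap.range (deltaOp p n) = Finsupp.supported (ZMod p) (ZMod p) E := by
    apply le_antisymm
    · erw [deltaOp, Finsupp.range_linearCombination]
      apply Submodule.span_le.2
      rintro _ ⟨m, rfl⟩
      rw [deltaMon]
      by_cases h : m.1.e = false ∧ 2 ≤ m.1.a
      · erw [dif_pos h]
        exact Finsupp.single_mem_supported _ _ rfl
      · erw [dif_neg h]
        exact Submodule.zero_mem _
    · rw [Finsupp.supported_eq_span_single]
      apply Submodule.span_le.2
      rintro _ ⟨t, ht, rfl⟩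
      have hte : t.1.e = true := ht
      have hw := t.2
      simp only [OddMon.weight, hte, cond_true] at hw
      set m' : Mn p n := ⟨⟨t.1.a + 2, t.1.b, false, t.1.s⟩, by
        simp only [OddMon.weight, cond_false]
        omega⟩ with hm'
      have hteq : t.1 = ⟨m'.1.a - 2, m'.1.b, true, m'.1.s⟩ := by
        show t.1 = ⟨t.1.a + 2 - 2, t.1.b, true, t.1.s⟩
        rw [Nat.add_sub_cancel, ← hte]
      have hamod : m'.1.a % p = n % p := a_mod p n m' rfl
      set c : ZMod p := ((m'.1.a * (m'.1.a - 1) : ℕ) : ZMod p) with hc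
      have hc0 : c ≠ 0 := coeff_ne p n hp h0 h1 _ hamod
      have hd : deltaMon p n m' = Finsupp.single t c :=
        deltaMon_eq p n m' rfl (by show 2 ≤ t.1.a + 2; omega) t hteq
      refine ⟨Finsupp.single m' c⁻¹, ?_⟩
      have happ : deltaOp p n (Finsupp.single m' c⁻¹) = c⁻¹ • deltaMon p n m' :=
        Finsupp.linearCombination_single (ZMod p) (v := deltaMon p n) c⁻¹ m'
      erw [happ, hd, Finsupp.smul_single, smul_eq_mul, inv_mul_cancel₀ hc0]
  refine ⟨hrange.trans hspan.symm, ?_⟩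
  set P := LinearMap.range (deltaOp p n) with hPdef
  have hP : P = Finsupp.supported (ZMod p) (ZMod p) E := hrange
  set q : ({m : Mn p n // m.1.e = false} →₀ ZMod p) →ₗ[ZMod p] (Hn p n ⧸ P) :=
    Finsupp.linearCombination (ZMod p)
      (fun m : {m : Mn p n // m.1.e = false} =>
        Submodule.Quotient.mk (Finsupp.single m.1 (1 : ZMod p))) with hq
  set ψ : ({m : Mn p n // m.1.e = false} →₀ ZMod p) →ₗ[ZMod p] Hn p n :=
    Finsupp.lmapDomain (ZMod p) (ZMod p)
      (Subtype.val : {m : Mn p n // m.1.e = false} → Mn p n) with hψ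
  have hψs : ∀ (a : {m : Mn p n // m.1.e = false}) (b : ZMod p),
      ψ (Finsupp.single a b) = Finsupp.single a.1 b := fun a b =>
    Finsupp.mapDomain_single
  have hqψ : q = P.mkQ.comp ψ := by
    apply Finsupp.lhom_ext
    intro a b
    erw [LinearMap.comp_apply, hψs, Submodule.mkQ_apply, hq,
      Finsupp.linearCombination_single, ← Submodule.Quotient.mk_smul,
      Finsupp.smul_single, smul_eq_mul, mul_one]
  have hinj : Function.Injective q := by
    have hker : ∀ x, q x = 0 → x = 0 := by
      intro x hx
      rw [hqψ] at hx
      have hmem : ψ x ∈ P := by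
        rwa [LinearMap.comp_apply, Submodule.mkQ_apply, Submodule.Quotient.mk_eq_zero] at hx
      erw [hP, Finsupp.mem_supported] at hmem
      have hsupp : (ψ x).support = x.support.image Subtype.val := by
        rw [hψ]
        exact Finsupp.mapDomain_support_of_injective Subtype.val_injective x
      have hempty : x.support = ∅ := by
        rw [Finset.eq_empty_iff_forall_notMem]
        intro m hm
        have : (m : Mn p n) ∈ (ψ x).support := by
          rw [hsupp]; exact Finset.mem_image_of_mem _ hm
        have hmE : (m : Mn p n) ∈ E := hmem this
        have : (m : Mn p n).1.e = true := hmE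
        simp [m.2] at this
      exact Finsupp.support_eq_empty.1 hempty
    intro x y h
    have := hker (x - y) (by rw [map_sub, h, sub_self])
    exact sub_eq_zero.1 this
  have hsurj : Function.Surjective q := by
    rw [← LinearMap.range_eq_top, hq, Finsupp.range_linearCombination, eq_top_iff]
    have h1' : (⊤ : Submodule (ZMod p) (Hn p n ⧸ P)) = Submodule.map P.mkQ ⊤ := by
      rw [Submodule.map_top, Submodule.range_mkQ]
    rw [h1']
    have h2' : (⊤ : Submodule (ZMod p) (Hn p n))
        = Submodule.span (ZMod p) ((fun m => Finsupp.single m (1 : ZMod p)) '' Set.univ) := by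
      erw [← Finsupp.supported_eq_span_single, Finsupp.supported_univ]
      exact rfl
    erw [h2', Submodule.map_span]
    apply Submodule.span_le.2
    rintro _ ⟨_, ⟨m, -, rfl⟩, rfl⟩
    rcases Bool.eq_false_or_eq_true m.1.e with hm | hm
    · have : Finsupp.single m (1 : ZMod p) ∈ P := by
        rw [hP]; exact Finsupp.single_mem_supported _ _ (show m ∈ E from hm)
      erw [Submodule.mkQ_apply, (Submodule.Quotient.mk_eq_zero P).2 this]
      exact Submodule.zero_mem _
    · exact Submodule.subset_span ⟨⟨m, hm⟩, rfl⟩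
  set eq := LinearEquiv.ofBijective q ⟨hinj, hsurj⟩ with heq
  refine ⟨(Finsupp.basisSingleOne).map eq, fun m => ?_⟩
  erw [Module.Basis.map_apply, Finsupp.coe_basisSingleOne]
  show eq (Finsupp.single m 1) = _
  erw [heq, LinearEquiv.ofBijective_apply, hq, Finsupp.linearCombination_single, one_smul]
  exact rfl
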